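/- If Ỹ ∈ ℝ^{N×M̃} and Q = Ỹ Ỹᵀ satisfies the distance constraints Q_{ii} + Q_{jj} − 2Q_{ij} = ‖Y_{i:} − Y_{j:}‖₂² for all edges (i,j) of a connected graph E on {1,…,N}, and all columns of Ỹ sum to zero, then tr(Q) ≤ (N/2) · (diam_E)², where diam_E is the maximum over i,k of the shortest-path length from i to k in E measured by summing edge lengths ‖Y_{i:} − Y_{j:}‖₂. -/

import Mathlib

open Finset Matrix

/-- Euclidean distance between rows `i` and `j` of the matrix `Y`. -/
noncomputable def rowDist {N M : ℕ} (Y : Matrix (Fin N) (Fin M) ℝ) (i j : Fin N) : ℝ :=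
  Real.sqrt (∑ c, (Y i c - Y j c) ^ 2)

/-- Length of a walk in the graph `G`, measured by summing the row-distance edge lengths. -/
noncomputable def walkLen {N M : ℕ} (Y : Matrix (Fin N) (Fin M) ℝ)
    {G : SimpleGraph (Fin N)} {i k : Fin N} (w : G.Walk i k) : ℝ :=
  (w.darts.map (fun d => rowDist Y d.toProd.1 d.toProd.2)).sum

/-- Shortest-path distance between `i` and `k` in `G`, with edge lengths given by the
row distances of `Y`. -/
noncomputable def spDist {N M : ℕ} (Y : Matrix (Fin N) (Fin M) ℝ)
    (G : SimpleGraph (Fin N)) (i k : Fin N) : ℝ :=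
  sInf {L : ℝ | ∃ w : G.Walk i k, walkLen Y w = L}

/-- Diameter of `G` with edge lengths given by the row distances of `Y`. -/
noncomputable def gDiam {N M : ℕ} (Y : Matrix (Fin N) (Fin M) ℝ)
    (G : SimpleGraph (Fin N)) : ℝ :=
  ⨆ i : Fin N, ⨆ k : Fin N, spDist Y G i k

/-- If `Q = Ỹ Ỹᵀ` satisfies the local distance constraints on the edges of a connected
graph and the columns of `Ỹ` sum to zero, then
`tr(Q) ≤ (N/2) · diam²` where `diam` is the shortest-path diameter of the graph with
edge lengths `‖Yᵢ: − Yⱼ:‖₂`. -/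
theorem stmt19 {N M Mt : ℕ} (Y : Matrix (Fin N) (Fin M) ℝ)
    (Yt : Matrix (Fin N) (Fin Mt) ℝ) (G : SimpleGraph (Fin N))
    (hG : G.Connected)
    (Q : Matrix (Fin N) (Fin N) ℝ)
    (hQ : Q = Yt * Ytᵀ)
    (hdist : ∀ i j : Fin N, G.Adj i j →
      Q i i + Q j j - 2 * Q i j = ∑ c, (Y i c - Y j c) ^ 2)
    (hcent : ∀ m : Fin Mt, ∑ i, Yt i m = 0) :
    Q.trace ≤ ((N : ℝ) / 2) * (gDiam Y G) ^ 2 := by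
  rcases Nat.eq_zero_or_pos N with hN | hN
  · subst hN
    simp [Matrix.trace]
  have hNpos : (0:ℝ) < N := by exact_mod_cast hN
  -- embed rows of Yt in Euclidean space
  set f : Fin N → EuclideanSpace ℝ (Fin Mt) := fun i => WithLp.toLp 2 (fun c => Yt i c) with hf
  have hdistf : ∀ i j, dist (f i) (f j) = Real.sqrt (∑ c, (Yt i c - Yt j c)^2) := by
    intro i j
    rw [EuclideanSpace.dist_eq]
    simp only [hf, PiLp.toLp_apply, Real.dist_eq, sq_abs]
  have hQij : ∀ i j, Q i j = ∑ c, Yt i c * Yt j c := by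
    intro i j
    simp [hQ, Matrix.mul_apply, Matrix.transpose_apply]
  have hdsq : ∀ i j, Q i i + Q j j - 2 * Q i j = ∑ c, (Yt i c - Yt j c)^2 := by
    intro i j
    simp only [hQij, Finset.mul_sum, ← Finset.sum_add_distrib, ← Finset.sum_sub_distrib]
    apply Finset.sum_congr rfl
    intro c _
    ring
  have hdsq' : ∀ i j, dist (f i) (f j) ^ 2 = Q i i + Q j j - 2 * Q i j := by
    intro i j
    rw [hdistf, hdsq, Real.sq_sqrt]
    positivity
  -- on edges, dist f equals rowDist
  have hedge : ∀ i j, G.Adj i j → dist (f i) (f j) = rowDist Y i j := by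
    intro i j hadj
    rw [hdistf, rowDist, ← hdsq, hdist i j hadj]
  -- walk length bounds dist
  have hwalk : ∀ i k (w : G.Walk i k), dist (f i) (f k) ≤ walkLen Y w := by
    intro i k w
    induction w with
    | nil => simp [walkLen]
    | cons h w ih =>
      rename_i a b c
      have : walkLen Y (SimpleGraph.Walk.cons h w) = rowDist Y a b + walkLen Y w := by
        simp [walkLen, SimpleGraph.Walk.darts_cons]
      rw [this, ← hedge a b h]
      calc dist (f a) (f c) ≤ dist (f a) (f b) + dist (f b) (f c) := dist_triangle _ _ _
        _ ≤ dist (f a) (f b) + walkLen Y w := by linarith [ih]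
  have hwalk_nonneg : ∀ i k (w : G.Walk i k), 0 ≤ walkLen Y w := by
    intro i k w
    apply List.sum_nonneg
    intro x hx
    simp only [List.mem_map] at hx
    obtain ⟨d, _, rfl⟩ := hx
    exact Real.sqrt_nonneg _
  -- dist f ≤ spDist
  have hsp : ∀ i k, dist (f i) (f k) ≤ spDist Y G i k := by
    intro i k
    apply le_csInf
    · obtain ⟨w⟩ := hG.preconnected i k
      exact ⟨walkLen Y w, w, rfl⟩
    · rintro L ⟨w, rfl⟩
      exact hwalk i k w
  have hsp_nonneg : ∀ i k, 0 ≤ spDist Y G i k := by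
    intro i k
    exact le_trans dist_nonneg (hsp i k)
  -- spDist ≤ gDiam
  have hdiam : ∀ i k, spDist Y G i k ≤ gDiam Y G := by
    intro i k
    have h1 : spDist Y G i k ≤ ⨆ k', spDist Y G i k' :=
      le_ciSup (Set.Finite.bddAbove (Set.finite_range _)) k
    have h2 : (⨆ k', spDist Y G i k') ≤ gDiam Y G :=
      le_ciSup (f := fun i => ⨆ k', spDist Y G i k')
        (Set.Finite.bddAbove (Set.finite_range _)) i
    exact h1.trans h2
  have hdiam_nonneg : 0 ≤ gDiam Y G := by
    have i : Fin N := ⟨0, hN⟩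
    exact (hsp_nonneg i i).trans (hdiam i i)
  -- each dsq bounded by diam²
  have hbound : ∀ i k, Q i i + Q k k - 2 * Q i k ≤ gDiam Y G ^ 2 := by
    intro i k
    rw [← hdsq' i k]
    have := (hsp i k).trans (hdiam i k)
    exact pow_le_pow_left₀ dist_nonneg this 2
  -- sum identity
  have hsum0 : ∑ i, ∑ j, Q i j = 0 := by
    simp only [hQij]
    have h : ∀ i : Fin N, ∑ j, ∑ c, Yt i c * Yt j c = 0 := by
      intro i
      rw [Finset.sum_comm]
      simp [← Finset.mul_sum, ← Finset.sum_mul, hcent]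
    simp [h]
  have htr : Q.trace = ∑ i, Q i i := by
    simp [Matrix.trace, Matrix.diag]
  have hkey : ∑ i, ∑ j, (Q i i + Q j j - 2 * Q i j) = 2 * N * Q.trace := by
    have h1 : ∑ i : Fin N, ∑ _j : Fin N, Q i i = N * Q.trace := by
      simp [htr, Finset.sum_const, Finset.mul_sum]
    have h2 : ∑ i : Fin N, ∑ j : Fin N, Q j j = N * Q.trace := by
      rw [Finset.sum_comm]
      exact h1
    calc ∑ i, ∑ j, (Q i i + Q j j - 2 * Q i j)
        = (∑ i : Fin N, ∑ _j : Fin N, Q i i) + (∑ i, ∑ j, Q j j)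
          - 2 * ∑ i, ∑ j, Q i j := by
          have hrow : ∀ i : Fin N, ∑ j, (Q i i + Q j j - 2 * Q i j)
              = (∑ _j : Fin N, Q i i) + (∑ j, Q j j) - 2 * ∑ j, Q i j := by
            intro i
            rw [Finset.sum_sub_distrib, Finset.sum_add_distrib, Finset.mul_sum]
          simp_rw [hrow]
          rw [Finset.sum_sub_distrib, Finset.sum_add_distrib, Finset.mul_sum]
      _ = 2 * N * Q.trace := by rw [h1, h2, hsum0]; ring
  have hle : ∑ i, ∑ j, (Q i i + Q j j - 2 * Q i j) ≤ (N:ℝ) * N * gDiam Y G ^ 2 := by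
    calc ∑ i, ∑ j, (Q i i + Q j j - 2 * Q i j) ≤ ∑ i : Fin N, ∑ j : Fin N, gDiam Y G ^ 2 := by
          apply Finset.sum_le_sum; intro i _; apply Finset.sum_le_sum; intro j _; exact hbound i j
      _ = (N:ℝ) * N * gDiam Y G ^ 2 := by simp [Finset.sum_const]; ring
  rw [hkey] at hle
  nlinarith [hle, hNpos]
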